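/- For every even integer M ≥ 4 and every 1 ≤ x ≤ M, the second moment of the number of elements of {1,…,x} matched within {1,…,x} under a uniformly random perfect matching satisfies E[Z_x²] = x(x−1)·(x² − 5x + 2M) / ((M−1)(M−3)). -/

import Mathlib

/-- The perfect matchings of `{1,…,M}` (modelled as `Fin M`): fixed-point-free
involutions of `Fin M`. -/
def matchings (M : ℕ) : Finset (Fin M → Fin M) :=
  Finset.univ.filter (fun ξ => (∀ i, ξ (ξ i) = i) ∧ ∀ i, ξ i ≠ i)

/-- `Z_x` : the number of elements of the first `x` points that are matched with
one of the first `x` points. -/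
def Zcard (M : ℕ) (x : ℕ) (ξ : Fin M → Fin M) : ℕ :=
  (Finset.univ.filter (fun i : Fin M => (i : ℕ) < x ∧ ((ξ i : Fin M) : ℕ) < x)).card

lemma mem_matchings {M : ℕ} {ξ : Fin M → Fin M} :
    ξ ∈ matchings M ↔ (∀ i, ξ (ξ i) = i) ∧ ∀ i, ξ i ≠ i := by
  simp [matchings]

/-- conjugation of a function by a permutation -/
def conj {M : ℕ} (σ : Equiv.Perm (Fin M)) (ξ : Fin M → Fin M) : Fin M → Fin M :=
  fun i => σ (ξ (σ.symm i))

lemma conj_mem {M : ℕ} (σ : Equiv.Perm (Fin M)) {ξ : Fin M → Fin M}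
    (h : ξ ∈ matchings M) : conj σ ξ ∈ matchings M := by
  rw [mem_matchings] at h ⊢
  refine ⟨fun i => ?_, fun i hi => ?_⟩
  · simp [conj, h.1]
  · simp only [conj] at hi
    exact h.2 (σ.symm i) (by simpa using congrArg σ.symm hi)

lemma conj_conj_symm {M : ℕ} (σ : Equiv.Perm (Fin M)) (ξ : Fin M → Fin M) :
    conj σ.symm (conj σ ξ) = ξ := by
  funext i; simp [conj]

lemma conj_symm_conj {M : ℕ} (σ : Equiv.Perm (Fin M)) (ξ : Fin M → Fin M) :
    conj σ (conj σ.symm ξ) = ξ := by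
  funext i; simp [conj]

def Acard (M : ℕ) (i j : Fin M) : ℕ := ((matchings M).filter fun ξ => ξ i = j).card

def Bcard (M : ℕ) (i k j l : Fin M) : ℕ :=
  ((matchings M).filter fun ξ => ξ i = k ∧ ξ j = l).card

lemma Acard_conj {M : ℕ} (σ : Equiv.Perm (Fin M)) (i j : Fin M) :
    Acard M (σ i) (σ j) = Acard M i j := by
  unfold Acard
  apply Finset.card_bij' (fun ξ _ => conj σ.symm ξ) (fun ξ _ => conj σ ξ)
  · intro ξ hξ
    simp only [Finset.mem_filter] at hξ ⊢
    refine ⟨conj_mem _ hξ.1, ?_⟩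
    have := hξ.2
    simp [conj, this]
  · intro ξ hξ
    simp only [Finset.mem_filter] at hξ ⊢
    refine ⟨conj_mem _ hξ.1, ?_⟩
    simp [conj, hξ.2]
  · intro ξ _; exact conj_symm_conj σ ξ
  · intro ξ _; exact conj_conj_symm σ ξ

lemma Bcard_conj {M : ℕ} (σ : Equiv.Perm (Fin M)) (i k j l : Fin M) :
    Bcard M (σ i) (σ k) (σ j) (σ l) = Bcard M i k j l := by
  unfold Bcard
  apply Finset.card_bij' (fun ξ _ => conj σ.symm ξ) (fun ξ _ => conj σ ξ)
  · intro ξ hξ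
    simp only [Finset.mem_filter] at hξ ⊢
    exact ⟨conj_mem _ hξ.1, by simp [conj, hξ.2.1], by simp [conj, hξ.2.2]⟩
  · intro ξ hξ
    simp only [Finset.mem_filter] at hξ ⊢
    exact ⟨conj_mem _ hξ.1, by simp [conj, hξ.2.1], by simp [conj, hξ.2.2]⟩
  · intro ξ _; exact conj_symm_conj σ ξ
  · intro ξ _; exact conj_conj_symm σ ξ
-- constancy of A
lemma Acard_const {M : ℕ} {i j j' : Fin M} (hj : j ≠ i) (hj' : j' ≠ i) :
    Acard M i j = Acard M i j' := by
  have h := Acard_conj (Equiv.swap j j') i j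
  rw [Equiv.swap_apply_of_ne_of_ne hj.symm hj'.symm, Equiv.swap_apply_left] at h
  exact h.symm

-- constancy of B over good pairs (i,j fixed)
lemma Bcard_const {M : ℕ} {i j k l k' l' : Fin M}
    (hki : k ≠ i) (hkj : k ≠ j) (hli : l ≠ i) (hlj : l ≠ j) (hlk : l ≠ k)
    (hki' : k' ≠ i) (hkj' : k' ≠ j) (hli' : l' ≠ i) (hlj' : l' ≠ j) (hlk' : l' ≠ k') :
    Bcard M i k j l = Bcard M i k' j l' := by
  set σ1 := Equiv.swap k k' with hσ1
  have e1 : Bcard M i k j l = Bcard M i k' j (σ1 l) := by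
    have h := Bcard_conj σ1 i k j l
    rw [Equiv.swap_apply_of_ne_of_ne hki.symm hki'.symm,
      Equiv.swap_apply_of_ne_of_ne hkj.symm hkj'.symm, Equiv.swap_apply_left] at h
    exact h.symm
  set l1 := σ1 l with hl1
  have hl1i : l1 ≠ i := by
    rw [hl1, hσ1]
    rcases eq_or_ne l k' with rfl | h
    · simpa [Equiv.swap_apply_right] using hki
    · rw [Equiv.swap_apply_of_ne_of_ne hlk h]; exact hli
  have hl1j : l1 ≠ j := by
    rw [hl1, hσ1]
    rcases eq_or_ne l k' with rfl | h
    · simpa [Equiv.swap_apply_right] using hkj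
    · rw [Equiv.swap_apply_of_ne_of_ne hlk h]; exact hlj
  have hl1k' : l1 ≠ k' := by
    rw [hl1, hσ1]
    rcases eq_or_ne l k' with rfl | h
    · simpa [Equiv.swap_apply_right] using hlk.symm
    · rw [Equiv.swap_apply_of_ne_of_ne hlk h]; exact h
  have e2 : Bcard M i k' j l1 = Bcard M i k' j l' := by
    have h := Bcard_conj (Equiv.swap l1 l') i k' j l1
    rw [Equiv.swap_apply_of_ne_of_ne hl1i.symm hli'.symm,
      Equiv.swap_apply_of_ne_of_ne hl1k'.symm hlk'.symm,
      Equiv.swap_apply_of_ne_of_ne hl1j.symm hlj'.symm, Equiv.swap_apply_left] at h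
    exact h.symm
  rw [e1, e2]
lemma Acard_self {M : ℕ} (i : Fin M) : Acard M i i = 0 := by
  rw [Acard, Finset.card_eq_zero, Finset.filter_eq_empty_iff]
  intro ξ hξ
  exact (mem_matchings.1 hξ).2 i

lemma Bcard_eq_zero_left {M : ℕ} (i j l : Fin M) : Bcard M i i j l = 0 := by
  rw [Bcard, Finset.card_eq_zero, Finset.filter_eq_empty_iff]
  intro ξ hξ h
  exact (mem_matchings.1 hξ).2 i h.1

lemma Bcard_eq_zero_right {M : ℕ} (i k j : Fin M) : Bcard M i k j j = 0 := by
  rw [Bcard, Finset.card_eq_zero, Finset.filter_eq_empty_iff]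
  intro ξ hξ h
  exact (mem_matchings.1 hξ).2 j h.2

lemma Bcard_eq_zero_kj {M : ℕ} {i j l : Fin M} (hl : l ≠ i) : Bcard M i j j l = 0 := by
  rw [Bcard, Finset.card_eq_zero, Finset.filter_eq_empty_iff]
  intro ξ hξ h
  have h1 := (mem_matchings.1 hξ).1 i
  rw [h.1, h.2] at h1
  exact hl h1

lemma Bcard_eq_zero_li {M : ℕ} {i k j : Fin M} (hk : k ≠ j) : Bcard M i k j i = 0 := by
  rw [Bcard, Finset.card_eq_zero, Finset.filter_eq_empty_iff]
  intro ξ hξ h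
  have h1 := (mem_matchings.1 hξ).1 j
  rw [h.2, h.1] at h1
  exact hk h1

lemma Bcard_eq_zero_diag {M : ℕ} {i k j : Fin M} (hij : i ≠ j) : Bcard M i k j k = 0 := by
  rw [Bcard, Finset.card_eq_zero, Finset.filter_eq_empty_iff]
  intro ξ hξ h
  have h1 := (mem_matchings.1 hξ).1 i
  have h2 := (mem_matchings.1 hξ).1 j
  rw [h.1] at h1; rw [h.2] at h2
  exact hij (h1 ▸ h2 ▸ rfl)

lemma Bcard_swapped {M : ℕ} (i j : Fin M) : Bcard M i j j i = Acard M i j := by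
  rw [Bcard, Acard]
  congr 1
  apply Finset.filter_congr
  intro ξ hξ
  constructor
  · exact fun h => h.1
  · intro h
    refine ⟨h, ?_⟩
    have h1 := (mem_matchings.1 hξ).1 i
    rw [h] at h1; exact h1

lemma sum_A_fibers {M : ℕ} (i : Fin M) (s : Finset (Fin M)) :
    ((matchings M).filter fun ξ => ξ i ∈ s).card = ∑ k ∈ s, Acard M i k := by
  have h0 : ∀ t : Finset (Fin M → Fin M), (∀ ξ ∈ t, ξ i ∈ s) →
      t.card = ∑ k ∈ s, (t.filter fun ξ => ξ i = k).card :=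
    fun t ht => Finset.card_eq_sum_card_fiberwise ht
  rw [h0 _ (fun ξ hξ => (Finset.mem_filter.1 hξ).2)]
  refine Finset.sum_congr rfl fun k hk => ?_
  unfold Acard
  congr 1
  ext ξ
  simp only [Finset.mem_filter]
  constructor
  · rintro ⟨⟨h1, _⟩, h3⟩; exact ⟨h1, h3⟩
  · rintro ⟨h1, h3⟩; exact ⟨⟨h1, h3 ▸ hk⟩, h3⟩

lemma sum_B_fibers {M : ℕ} (i j : Fin M) (s : Finset (Fin M)) :
    ((matchings M).filter fun ξ => ξ i ∈ s ∧ ξ j ∈ s).card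
      = ∑ p ∈ s ×ˢ s, Bcard M i p.1 j p.2 := by
  have h0 : ∀ t : Finset (Fin M → Fin M), (∀ ξ ∈ t, (ξ i, ξ j) ∈ s ×ˢ s) →
      t.card = ∑ p ∈ s ×ˢ s, (t.filter fun ξ => (ξ i, ξ j) = p).card :=
    fun t ht => Finset.card_eq_sum_card_fiberwise ht
  rw [h0 _ (fun ξ hξ => by
    simp only [Finset.mem_product]
    exact (Finset.mem_filter.1 hξ).2)]
  refine Finset.sum_congr rfl fun p hp => ?_
  unfold Bcard
  congr 1
  ext ξ
  simp only [Finset.mem_filter, Prod.ext_iff, Finset.mem_product] at *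
  constructor
  · rintro ⟨⟨h1, _⟩, h3⟩; exact ⟨h1, h3⟩
  · rintro ⟨h1, h3⟩; exact ⟨⟨h1, h3.1 ▸ hp.1, h3.2 ▸ hp.2⟩, h3⟩
lemma sum_B_split {M : ℕ} {i j : Fin M} (hij : i ≠ j) {s : Finset (Fin M)}
    (hi : i ∈ s) (hj : j ∈ s) :
    ∑ p ∈ s ×ˢ s, Bcard M i p.1 j p.2
      = Acard M i j + ∑ p ∈ (s \ {i, j}).offDiag, Bcard M i p.1 j p.2 := by
  have hsub : (s \ {i, j}).offDiag ⊆ s ×ˢ s := by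
    intro p hp
    rw [Finset.mem_offDiag] at hp
    rw [Finset.mem_product]
    exact ⟨(Finset.mem_sdiff.1 hp.1).1, (Finset.mem_sdiff.1 hp.2.1).1⟩
  rw [← Finset.sum_sdiff hsub]
  have hrest : ∑ p ∈ (s ×ˢ s) \ (s \ {i, j}).offDiag, Bcard M i p.1 j p.2
      = Acard M i j := by
    rw [Finset.sum_eq_single_of_mem ((j, i) : Fin M × Fin M)]
    · exact Bcard_swapped i j
    · rw [Finset.mem_sdiff, Finset.mem_product, Finset.mem_offDiag]
      refine ⟨⟨hj, hi⟩, fun hc => ?_⟩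
      have := (Finset.mem_sdiff.1 hc.1).2
      simp at this
    · rintro ⟨k, l⟩ hkl hne
      rw [Finset.mem_sdiff, Finset.mem_product, Finset.mem_offDiag] at hkl
      obtain ⟨⟨hks, hls⟩, hnot⟩ := hkl
      rcases eq_or_ne k i with rfl | hki
      · exact Bcard_eq_zero_left _ _ _
      rcases eq_or_ne l j with rfl | hlj
      · exact Bcard_eq_zero_right _ _ _
      rcases eq_or_ne k j with rfl | hkj
      · have hli : l ≠ i := fun hc => hne (by rw [hc])
        exact Bcard_eq_zero_kj hli
      rcases eq_or_ne l i with rfl | hli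
      · exact Bcard_eq_zero_li hkj
      rcases eq_or_ne l k with rfl | hlk
      · exact Bcard_eq_zero_diag hij
      · exact absurd ⟨Finset.mem_sdiff.2 ⟨hks, by simp [hki, hkj]⟩,
           Finset.mem_sdiff.2 ⟨hls, by simp [hli, hlj]⟩,
           fun h => hlk h.symm⟩ hnot
  rw [hrest, add_comm]
lemma hA_nat {M : ℕ} {i j : Fin M} (hij : j ≠ i) :
    (M - 1) * Acard M i j = (matchings M).card := by
  have h1 := sum_A_fibers i (Finset.univ : Finset (Fin M))
  rw [Finset.filter_true_of_mem (fun _ _ => Finset.mem_univ _)] at h1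
  rw [← Finset.sum_erase_add _ _ (Finset.mem_univ i), Acard_self, add_zero] at h1
  have h2 : ∀ k ∈ Finset.univ.erase i, Acard M i k = Acard M i j := by
    intro k hk
    exact Acard_const (Finset.ne_of_mem_erase hk) hij
  rw [Finset.sum_congr rfl h2, Finset.sum_const, smul_eq_mul,
    Finset.card_erase_of_mem (Finset.mem_univ i), Finset.card_univ, Fintype.card_fin] at h1
  exact h1.symm

lemma hB_nat {M : ℕ} (hM : 4 ≤ M) {i j k l : Fin M} (hij : i ≠ j)
    (hki : k ≠ i) (hkj : k ≠ j) (hli : l ≠ i) (hlj : l ≠ j) (hlk : l ≠ k) :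
    (M - 1) * ((M - 3) * Bcard M i k j l) = (matchings M).card := by
  obtain ⟨m, rfl⟩ : ∃ m, M = m + 4 := ⟨M - 4, by omega⟩
  set N := (matchings (m + 4)).card with hN
  have h1 := sum_B_fibers i j (Finset.univ : Finset (Fin (m + 4)))
  rw [Finset.filter_true_of_mem (fun _ _ => ⟨Finset.mem_univ _, Finset.mem_univ _⟩)] at h1
  rw [← hN] at h1
  rw [sum_B_split hij (Finset.mem_univ i) (Finset.mem_univ j)] at h1
  have h2 : ∀ p ∈ ((Finset.univ : Finset (Fin (m + 4))) \ {i, j}).offDiag,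
      Bcard (m + 4) i p.1 j p.2 = Bcard (m + 4) i k j l := by
    rintro ⟨a, b⟩ hp
    rw [Finset.mem_offDiag] at hp
    obtain ⟨ha, hb, hab⟩ := hp
    rw [Finset.mem_sdiff] at ha hb
    simp only [Finset.mem_insert, Finset.mem_singleton, not_or] at ha hb
    exact Bcard_const ha.2.1 ha.2.2 hb.2.1 hb.2.2 (fun h => hab h.symm)
      hki hkj hli hlj hlk
  rw [Finset.sum_congr rfl h2, Finset.sum_const, smul_eq_mul] at h1
  have hcard : ((Finset.univ : Finset (Fin (m + 4))) \ {i, j}).card = m + 2 := by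
    rw [Finset.card_sdiff_of_subset (by simp), Finset.card_univ, Fintype.card_fin,
      Finset.card_insert_of_notMem (by simpa using hij), Finset.card_singleton]
    omega
  rw [Finset.offDiag_card, hcard] at h1
  have hA := hA_nat (M := m + 4) (i := i) (j := k) hki
  -- h1 : N = Acard i k? no: Acard i j
  -- h1 : N = Acard (m+4) i j + ((m+2)*(m+2) - (m+2)) * B
  have hAij := hA_nat (M := m + 4) (i := i) (j := j) (hij.symm)
  set A := Acard (m + 4) i j
  set B := Bcard (m + 4) i k j l
  have hoff : (m + 2) * (m + 2) - (m + 2) = (m + 2) * (m + 1) := by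
    zify [Nat.le_mul_of_pos_left (m + 2) (by omega : 0 < m + 2)]
    ring
  rw [hoff] at h1
  -- hAij : (m + 3) * A = N ;  h1 : N = A + (m+2)*(m+1)*B ; goal (m+3)*((m+1)*B) = N
  have key : (m + 2) * ((m + 4 - 1) * ((m + 4 - 3) * B)) = (m + 2) * N := by
    have e1 : (m + 4 - 1) = m + 3 := by omega
    have e2 : (m + 4 - 3) = m + 1 := by omega
    rw [e1, e2]
    have hAij' : (m + 4 - 1) * A = N := hAij
    rw [e1] at hAij'
    zify at h1 hAij' ⊢
    linear_combination (-(m : ℤ) - 3) * h1 - hAij'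
  exact Nat.eq_of_mul_eq_mul_left (by omega) key
lemma matchings_nonempty {M : ℕ} (hM2 : 2 ≤ M) (hE : Even M) :
    (matchings M).Nonempty := by
  have hmod : M % 2 = 0 := Nat.even_iff.1 hE
  refine ⟨fun i => ⟨if (i : ℕ) % 2 = 0 then (i : ℕ) + 1 else (i : ℕ) - 1, ?_⟩, ?_⟩
  · have := i.isLt
    split_ifs with h <;> omega
  · rw [mem_matchings]
    constructor
    · intro i
      have hi := i.isLt
      apply Fin.ext
      simp only
      split_ifs with h1 h2 h2 <;> omega
    · intro i h
      have hi := i.isLt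
      have := congrArg Fin.val h
      simp only at this
      split_ifs at this <;> omega

lemma tx_card {M x : ℕ} (hxM : x ≤ M) :
    ((Finset.univ : Finset (Fin M)).filter fun i : Fin M => (i : ℕ) < x).card = x := by
  classical
  have : ((Finset.univ : Finset (Fin M)).filter fun i : Fin M => (i : ℕ) < x)
      = Finset.map (Fin.castLEEmb hxM) Finset.univ := by
    ext k
    simp only [Finset.mem_filter, Finset.mem_univ, true_and, Finset.mem_map]
    constructor
    · intro hk
      exact ⟨⟨(k : ℕ), hk⟩, Fin.ext rfl⟩
    · rintro ⟨a, rfl⟩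
      simp [Fin.castLEEmb]
  rw [this, Finset.card_map, Finset.card_univ, Fintype.card_fin]

/-- For every even integer `M ≥ 4` and every `1 ≤ x ≤ M`, the second momset_option maxHeartbeats 1000000 in
ent of
the number of elements of `{1,…,x}` matched within `{1,…,x}` under a uniformly
random perfect matching satisfies
`E[Z_x²] = x(x−1)·(x² − 5x + 2M) / ((M−1)(M−3))`. -/
theorem stmt6 (M : ℕ) (hM : 4 ≤ M) (hEven : Even M) (x : ℕ) (hx1 : 1 ≤ x) (hxM : x ≤ M) :
    (∑ ξ ∈ matchings M, ((Zcard M x ξ : ℝ)) ^ 2) / ((matchings M).card : ℝ)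
      = (x : ℝ) * ((x : ℝ) - 1) * ((x : ℝ) ^ 2 - 5 * (x : ℝ) + 2 * (M : ℝ))
          / (((M : ℝ) - 1) * ((M : ℝ) - 3)) := by
  classical
  have hM4 : (4 : ℝ) ≤ (M : ℝ) := by exact_mod_cast hM
  have hM1 : ((M : ℝ) - 1) ≠ 0 := by linarith
  have hM3 : ((M : ℝ) - 3) ≠ 0 := by linarith
  set N : ℕ := (matchings M).card with hN
  have hNpos : 0 < N := Finset.card_pos.2 (matchings_nonempty (by omega) hEven)
  have hNne : ((N : ℕ) : ℝ) ≠ 0 := Nat.cast_ne_zero.2 hNpos.ne'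
  set tx : Finset (Fin M) := Finset.univ.filter (fun i : Fin M => (i : ℕ) < x) with htxdef
  have htx : tx.card = x := tx_card hxM
  -- real versions of the counting identities
  have hAr : ∀ {i j : Fin M}, j ≠ i → ((Acard M i j : ℕ) : ℝ) = (N : ℝ) / ((M : ℝ) - 1) := by
    intro i j hij
    have h := hA_nat hij
    have h' : (((M - 1 : ℕ) : ℝ)) * ((Acard M i j : ℕ) : ℝ) = (N : ℝ) := by exact_mod_cast h
    rw [Nat.cast_sub (by omega : 1 ≤ M)] at h'
    rw [eq_div_iff hM1]
    push_cast at h' ⊢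
    linarith [h']
  have hBr : ∀ {i j k l : Fin M}, i ≠ j → k ≠ i → k ≠ j → l ≠ i → l ≠ j → l ≠ k →
      ((Bcard M i k j l : ℕ) : ℝ) = (N : ℝ) / (((M : ℝ) - 1) * ((M : ℝ) - 3)) := by
    intro i j k l hij hki hkj hli hlj hlk
    have h := hB_nat hM hij hki hkj hli hlj hlk
    have h' : (((M - 1 : ℕ) : ℝ)) * ((((M - 3 : ℕ) : ℝ)) * ((Bcard M i k j l : ℕ) : ℝ))
        = (N : ℝ) := by exact_mod_cast h
    rw [Nat.cast_sub (by omega : 1 ≤ M), Nat.cast_sub (by omega : 3 ≤ M)] at h'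
    rw [eq_div_iff (mul_ne_zero hM1 hM3)]
    push_cast at h' ⊢
    linear_combination h'
  -- the local C counts
  set C : Fin M → Fin M → ℕ :=
    fun i j => ((matchings M).filter fun ξ => ξ i ∈ tx ∧ ξ j ∈ tx).card with hCdef
  -- Z as an indicator sum
  have hZ : ∀ ξ : Fin M → Fin M,
      (Zcard M x ξ : ℝ) = ∑ i ∈ tx, (if ξ i ∈ tx then (1 : ℝ) else 0) := by
    intro ξ
    rw [Finset.sum_boole]
    have : Zcard M x ξ = (tx.filter fun i => ξ i ∈ tx).card := by
      unfold Zcard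
      congr 1
      ext i
      simp [htxdef, Finset.mem_filter]
    rw [this]
  -- the second moment as a sum over pairs
  have hS : ∑ ξ ∈ matchings M, ((Zcard M x ξ : ℝ)) ^ 2
      = ∑ p ∈ tx ×ˢ tx, ((C p.1 p.2 : ℕ) : ℝ) := by
    have step1 : ∀ ξ : Fin M → Fin M, ((Zcard M x ξ : ℝ)) ^ 2
        = ∑ p ∈ tx ×ˢ tx,
          ((if ξ p.1 ∈ tx then (1 : ℝ) else 0) * (if ξ p.2 ∈ tx then (1 : ℝ) else 0)) := by
      intro ξ
      rw [hZ, pow_two, Finset.sum_mul_sum, Finset.sum_product]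
    rw [Finset.sum_congr rfl fun ξ _ => step1 ξ, Finset.sum_comm]
    refine Finset.sum_congr rfl fun p _ => ?_
    have : ∀ ξ : Fin M → Fin M,
        (if ξ p.1 ∈ tx then (1 : ℝ) else 0) * (if ξ p.2 ∈ tx then (1 : ℝ) else 0)
        = if ξ p.1 ∈ tx ∧ ξ p.2 ∈ tx then (1 : ℝ) else 0 := by
      intro ξ; split_ifs <;> simp_all <;> omega
    rw [Finset.sum_congr rfl fun ξ _ => this ξ, Finset.sum_boole]
  -- diagonal terms
  have hCdiag : ∀ i ∈ tx, ((C i i : ℕ) : ℝ) = ((x : ℝ) - 1) * ((N : ℝ) / ((M : ℝ) - 1)) := by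
    intro i hi
    have h1 : C i i = ∑ k ∈ tx, Acard M i k := by
      rw [hCdef]
      simp only [and_self]
      exact sum_A_fibers i tx
    have h2 : ∑ k ∈ tx, Acard M i k = ∑ k ∈ tx.erase i, Acard M i k := by
      rw [← Finset.sum_erase_add _ _ hi, Acard_self, add_zero]
    rw [h1, h2]
    push_cast
    rw [Finset.sum_congr rfl fun k hk => hAr (Finset.ne_of_mem_erase hk)]
    rw [Finset.sum_const, Finset.card_erase_of_mem hi, htx, nsmul_eq_mul,
      Nat.cast_sub hx1, Nat.cast_one]
  -- off-diagonal terms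
  have hCoff : ∀ p ∈ tx.offDiag, ((C p.1 p.2 : ℕ) : ℝ)
      = (N : ℝ) / ((M : ℝ) - 1)
        + (((x : ℝ) - 2) * ((x : ℝ) - 2) - ((x : ℝ) - 2))
          * ((N : ℝ) / (((M : ℝ) - 1) * ((M : ℝ) - 3))) := by
    rintro ⟨i, j⟩ hp
    rw [Finset.mem_offDiag] at hp
    obtain ⟨hi, hj, hij⟩ := hp
    have hx2 : 2 ≤ x := by
      have := Finset.one_lt_card.2 ⟨i, hi, j, hj, hij⟩
      omega
    have h1 : C i j = Acard M i j + ∑ q ∈ (tx \ {i, j}).offDiag, Bcard M i q.1 j q.2 := by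
      rw [hCdef]
      simp only
      rw [sum_B_fibers i j tx, sum_B_split hij hi hj]
    have h2 : ∀ q ∈ (tx \ {i, j}).offDiag,
        ((Bcard M i q.1 j q.2 : ℕ) : ℝ) = (N : ℝ) / (((M : ℝ) - 1) * ((M : ℝ) - 3)) := by
      rintro ⟨a, b⟩ hq
      rw [Finset.mem_offDiag] at hq
      obtain ⟨ha, hb, hab⟩ := hq
      rw [Finset.mem_sdiff] at ha hb
      simp only [Finset.mem_insert, Finset.mem_singleton, not_or] at ha hb
      exact hBr hij ha.2.1 ha.2.2 hb.2.1 hb.2.2 (fun h => hab h.symm)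
    have hc : (tx \ {i, j}).card = x - 2 := by
      rw [Finset.card_sdiff_of_subset (by
        intro a ha
        simp only [Finset.mem_insert, Finset.mem_singleton] at ha
        rcases ha with rfl | rfl
        · exact hi
        · exact hj)]
      rw [Finset.card_insert_of_notMem (by simpa using hij), Finset.card_singleton, htx]
    have hcnt : ((tx \ {i, j}).offDiag.card : ℝ)
        = ((x : ℝ) - 2) * ((x : ℝ) - 2) - ((x : ℝ) - 2) := by
      rw [Finset.offDiag_card, hc]
      have hle : x - 2 ≤ (x - 2) * (x - 2) := by nlinarith [Nat.sub_le x 2]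
      rw [Nat.cast_sub hle, Nat.cast_mul, Nat.cast_sub hx2]
      push_cast
      ring
    rw [h1]
    push_cast
    rw [Finset.sum_congr rfl h2, Finset.sum_const, nsmul_eq_mul, hcnt,
      hAr hij.symm]
  -- put everything together
  rw [hS, ← Finset.diag_union_offDiag tx,
    Finset.sum_union (Finset.disjoint_diag_offDiag tx), Finset.sum_diag,
    Finset.sum_congr rfl hCdiag, Finset.sum_congr rfl hCoff,
    Finset.sum_const, Finset.sum_const, htx, Finset.offDiag_card, htx]
  have hxx : ((x * x - x : ℕ) : ℝ) = (x : ℝ) * (x : ℝ) - (x : ℝ) := by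
    have : x ≤ x * x := by nlinarith
    rw [Nat.cast_sub this, Nat.cast_mul]
  rw [nsmul_eq_mul, nsmul_eq_mul, hxx]
  rw [div_eq_div_iff (by positivity) (by
    intro h
    exact (mul_ne_zero hM1 hM3) h)]
  field_simp
  ring
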